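/- Let ω : [0,∞) → [0,∞) be continuous, nondecreasing, with ω(t) = 0 for 0 ≤ t ≤ 1, ω(t)/t → 0 as t → ∞, and φ(t) := ω(e^t) convex. Let φ*(s) = sup_{t ≥ 0}(ts − φ(t)) (so φ*(0) = 0 and φ* is convex, hence φ*(s) + φ*(p) ≤ φ*(s+p)). Then for every ε > 0 there exists a constant R > 0 such that s^{s/2} · e^{φ*(p)} ≤ R · (ε e)^s · e^{φ*(p+s)} for all real s > 0 and all p ∈ ℕ₀. -/

import Mathlib

/-- Let `ω : [0,∞) → [0,∞)` be continuous, nondecreasing, vanishing on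
`[0,1]`, with `ω t / t → 0` as `t → ∞` and `φ(t) = ω (e^t)` convex on `[0,∞)`, and let
`φ*(s) = sup_{t ≥ 0} (t·s − φ t)` (finite on `[0,∞)`). Then for every `ε > 0` there is
`R > 0` such that `s^{s/2} · e^{φ*(p)} ≤ R · (ε·e)^s · e^{φ*(p+s)}` for all real `s > 0`
and all `p ∈ ℕ₀`. -/
theorem langenbruch_condition (ω φstar : ℝ → ℝ)
    (hcont : ContinuousOn ω (Set.Ici (0 : ℝ)))
    (hmono : ∀ s t : ℝ, 0 ≤ s → s ≤ t → ω s ≤ ω t)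
    (hnonneg : ∀ t : ℝ, 0 ≤ t → 0 ≤ ω t)
    (h01 : ∀ t : ℝ, 0 ≤ t → t ≤ 1 → ω t = 0)
    (hsmall : Filter.Tendsto (fun t : ℝ => ω t / t) Filter.atTop (nhds 0))
    (hconv : ConvexOn ℝ (Set.Ici (0 : ℝ)) (fun t : ℝ => ω (Real.exp t)))
    (hφstar : ∀ s : ℝ, 0 ≤ s →
      IsLUB {x : ℝ | ∃ t : ℝ, 0 ≤ t ∧ x = t * s - ω (Real.exp t)} (φstar s)) :
    ∀ ε : ℝ, 0 < ε → ∃ R : ℝ, 0 < R ∧ ∀ s : ℝ, 0 < s → ∀ p : ℕ,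
      s ^ (s / 2) * Real.exp (φstar p)
        ≤ R * (ε * Real.exp 1) ^ s * Real.exp (φstar ((p : ℝ) + s)) := by
  -- lower bound from membership
  have hlb : ∀ s t : ℝ, 0 ≤ s → 0 ≤ t → t * s - ω (Real.exp t) ≤ φstar s := by
    intro s t hs ht
    exact (hφstar s hs).1 ⟨t, ht, rfl⟩
  -- φstar 0 = 0
  have hstar0 : φstar 0 = 0 := by
    have h := hφstar 0 le_rfl
    have hmem : (0:ℝ) ∈ {x : ℝ | ∃ t, 0 ≤ t ∧ x = t * 0 - ω (Real.exp t)} := by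
      refine ⟨0, le_rfl, ?_⟩
      simp [Real.exp_zero, h01 1 zero_le_one le_rfl]
    have hub : ∀ x ∈ {x : ℝ | ∃ t, 0 ≤ t ∧ x = t * 0 - ω (Real.exp t)}, x ≤ 0 := by
      rintro x ⟨t, ht, rfl⟩
      have := hnonneg (Real.exp t) (Real.exp_pos t).le
      linarith
    exact le_antisymm (h.2 hub) (h.1 hmem)
  -- monotonicity of φstar
  have hstarmono : ∀ a b : ℝ, 0 ≤ a → a ≤ b → φstar a ≤ φstar b := by
    intro a b ha hab
    refine (hφstar a ha).2 ?_
    rintro x ⟨t, ht, rfl⟩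
    have h1 : t * a - ω (Real.exp t) ≤ t * b - ω (Real.exp t) := by nlinarith
    exact h1.trans (hlb b t (ha.trans hab) ht)
  -- convexity-type inequality for φstar
  have hconvx : ∀ a b l : ℝ, 0 ≤ a → 0 ≤ b → 0 ≤ l → l ≤ 1 →
      φstar (l * a + (1 - l) * b) ≤ l * φstar a + (1 - l) * φstar b := by
    intro a b l ha hb hl0 hl1
    have hab : 0 ≤ l * a + (1 - l) * b := by nlinarith
    refine (hφstar _ hab).2 ?_
    rintro x ⟨t, ht, rfl⟩
    have h1 := hlb a t ha ht
    have h2 := hlb b t hb ht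
    nlinarith
  -- superadditivity of φstar
  have hsuper : ∀ a b : ℝ, 0 ≤ a → 0 ≤ b → φstar a + φstar b ≤ φstar (a + b) := by
    intro a b ha hb
    rcases eq_or_lt_of_le (by linarith : (0:ℝ) ≤ a + b) with h | h
    · have ha0 : a = 0 := by linarith
      have hb0 : b = 0 := by linarith
      simp [ha0, hb0, hstar0]
    · have h1 := hconvx (a + b) 0 (a / (a + b)) (by linarith) le_rfl
        (by positivity) (by rw [div_le_one h]; linarith)
      have h2 := hconvx (a + b) 0 (b / (a + b)) (by linarith) le_rfl
        (by positivity) (by rw [div_le_one h]; linarith)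
      rw [show a / (a + b) * (a + b) + (1 - a / (a + b)) * 0 = a by field_simp; ring] at h1
      rw [show b / (a + b) * (a + b) + (1 - b / (a + b)) * 0 = b by field_simp; ring] at h2
      rw [hstar0] at h1 h2
      have h3 : a / (a + b) * φstar (a + b) + b / (a + b) * φstar (a + b) = φstar (a + b) := by
        rw [← add_mul]
        have : a / (a + b) + b / (a + b) = 1 := by field_simp
        rw [this, one_mul]
      linarith
  -- extract a threshold from hsmall
  have hev : ∀ᶠ u in Filter.atTop, ω u / u < 1 := hsmall.eventually_lt_const one_pos
  obtain ⟨M0, hM0⟩ := Filter.eventually_atTop.mp hev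
  intro ε hε
  set M := max M0 1 with hMdef
  have hM1 : (1:ℝ) ≤ M := le_max_right _ _
  have hM : ∀ u : ℝ, M ≤ u → ω u ≤ u := by
    intro u hu
    have hupos : (0:ℝ) < u := lt_of_lt_of_le one_pos (hM1.trans hu)
    have h := hM0 u (le_trans (le_max_left _ _) hu)
    calc ω u = ω u / u * u := by field_simp
      _ ≤ 1 * u := mul_le_mul_of_nonneg_right h.le hupos.le
      _ = u := one_mul u
  set c := Real.log ε with hc
  set S₀ := max 1 (max (ε^2) (max ((M*ε)^2) (1/ε^2))) with hS
  have hS1 : (1:ℝ) ≤ S₀ := le_max_left _ _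
  set A := max 1 (S₀ ^ (S₀/2)) with hA
  set B := max 1 ((ε * Real.exp 1) ^ (-S₀)) with hB
  have hA1 : (1:ℝ) ≤ A := le_max_left _ _
  have hB1 : (1:ℝ) ≤ B := le_max_left _ _
  have hApos : (0:ℝ) < A := lt_of_lt_of_le one_pos hA1
  have hBpos : (0:ℝ) < B := lt_of_lt_of_le one_pos hB1
  have hεe : (0:ℝ) < ε * Real.exp 1 := by positivity
  refine ⟨A * B, mul_pos hApos hBpos, ?_⟩
  intro s hs p
  have hps : (0:ℝ) ≤ (p:ℝ) := Nat.cast_nonneg p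
  have hmono_p : φstar p ≤ φstar ((p:ℝ) + s) := hstarmono _ _ hps (by linarith)
  by_cases hcase : s ≤ S₀
  · -- small s: crude bounds
    have h2 : s ^ (s/2) ≤ A := by
      rcases le_or_gt s 1 with h | h
      · exact le_trans (Real.rpow_le_one hs.le h (by linarith)) hA1
      · calc s ^ (s/2) ≤ S₀ ^ (s/2) := Real.rpow_le_rpow hs.le hcase (by linarith)
          _ ≤ S₀ ^ (S₀/2) := Real.rpow_le_rpow_of_exponent_le hS1 (by linarith)
          _ ≤ A := le_max_right _ _
    have h3 : (1:ℝ) ≤ B * (ε * Real.exp 1) ^ s := by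
      have hx : (ε * Real.exp 1) ^ (-s) ≤ B := by
        rcases le_or_gt 1 (ε * Real.exp 1) with h | h
        · exact le_trans (Real.rpow_le_one_of_one_le_of_nonpos h (by linarith)) hB1
        · exact le_trans (Real.rpow_le_rpow_of_exponent_ge hεe h.le (by linarith))
            (le_max_right _ _)
      calc (1:ℝ) = (ε * Real.exp 1) ^ (-s) * (ε * Real.exp 1) ^ s := by
            rw [← Real.rpow_add hεe]; simp
        _ ≤ B * (ε * Real.exp 1) ^ s :=
            mul_le_mul_of_nonneg_right hx (Real.rpow_nonneg hεe.le s)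
    calc s ^ (s/2) * Real.exp (φstar p)
        ≤ A * Real.exp (φstar ((p:ℝ)+s)) :=
          mul_le_mul h2 (Real.exp_le_exp.mpr hmono_p) (Real.exp_pos _).le hApos.le
      _ ≤ (A * (B * (ε * Real.exp 1) ^ s)) * Real.exp (φstar ((p:ℝ)+s)) := by
          apply mul_le_mul_of_nonneg_right _ (Real.exp_pos _).le
          exact le_mul_of_one_le_right hApos.le h3
      _ = A * B * (ε * Real.exp 1) ^ s * Real.exp (φstar ((p:ℝ)+s)) := by ring
  · -- large s
    push_neg at hcase
    have hs1 : (1:ℝ) ≤ s := le_trans hS1 hcase.le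
    have hεsq : ε^2 ≤ s :=
      le_trans (le_trans (le_max_left _ _) (le_max_right _ _)) hcase.le
    have hMεsq : (M*ε)^2 ≤ s :=
      le_trans (le_trans (le_trans (le_max_left _ _) (le_max_right _ _)) (le_max_right _ _))
        hcase.le
    have hinvεsq : 1/ε^2 ≤ s :=
      le_trans (le_trans (le_trans (le_max_right _ _) (le_max_right _ _)) (le_max_right _ _))
        hcase.le
    set t := (1/2) * Real.log s - c with htdef
    have hlog2 : 2 * c ≤ Real.log s := by
      have h := Real.log_le_log (by positivity : (0:ℝ) < ε^2) hεsq
      rw [Real.log_pow] at h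
      push_cast at h
      linarith
    have ht0 : 0 ≤ t := by rw [htdef]; linarith
    have hsqrt : Real.sqrt s = Real.exp ((1/2) * Real.log s) := by
      rw [Real.sqrt_eq_rpow, Real.rpow_def_of_pos hs]; ring_nf
    have hexpt : Real.exp t = Real.sqrt s / ε := by
      rw [htdef, Real.exp_sub, hc, Real.exp_log hε, hsqrt]
    -- bounds on u := sqrt s / ε
    have hMε0 : (0:ℝ) ≤ M * ε := by positivity
    have hsqrtMε : M * ε ≤ Real.sqrt s := by
      have := Real.sqrt_le_sqrt hMεsq
      rwa [Real.sqrt_sq hMε0] at this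
    have hsqrtinv : 1/ε ≤ Real.sqrt s := by
      have := Real.sqrt_le_sqrt hinvεsq
      have h1 : Real.sqrt (1/ε^2) = 1/ε := by
        rw [show (1:ℝ)/ε^2 = (1/ε)^2 by ring, Real.sqrt_sq (by positivity)]
      rwa [h1] at this
    have hMu : M ≤ Real.sqrt s / ε := by
      rw [le_div_iff₀ hε]; linarith
    have hus : Real.sqrt s / ε ≤ s := by
      rw [div_le_iff₀ hε]
      have h1 : 1 ≤ Real.sqrt s * ε := by
        rw [← div_le_iff₀ hε] at *; linarith
      nlinarith [Real.sq_sqrt hs.le, Real.sqrt_nonneg s]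
    have hωu : ω (Real.exp t) ≤ s := by
      rw [hexpt]
      exact le_trans (hM _ hMu) hus
    have hφs : (1/2) * Real.log s * s - c * s - s ≤ φstar s := by
      have h := hlb s t hs.le ht0
      have h' : ((1/2) * Real.log s - c) * s - ω (Real.exp t) ≤ φstar s := by
        rw [← htdef]; exact h
      linarith [hωu]
    have hsum := le_trans (add_le_add (le_refl (φstar p)) hφs) (hsuper _ s hps hs.le)
    have e1 : s ^ (s/2) = Real.exp (Real.log s * (s/2)) := Real.rpow_def_of_pos hs _
    have e2 : (ε * Real.exp 1) ^ s = Real.exp ((c + 1) * s) := by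
      rw [Real.rpow_def_of_pos hεe, Real.log_mul (ne_of_gt hε) (ne_of_gt (Real.exp_pos 1)),
        Real.log_exp, hc]
    have hAB1 : (1:ℝ) ≤ A * B := one_le_mul_of_one_le_of_one_le hA1 hB1
    calc s ^ (s/2) * Real.exp (φstar p)
        = Real.exp (Real.log s * (s/2) + φstar p) := by rw [e1, ← Real.exp_add]
      _ ≤ Real.exp ((c+1)*s + φstar ((p:ℝ)+s)) := by
          apply Real.exp_le_exp.mpr; linarith [hsum]
      _ = (ε * Real.exp 1) ^ s * Real.exp (φstar ((p:ℝ)+s)) := by rw [e2, Real.exp_add]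
      _ ≤ A * B * ((ε * Real.exp 1) ^ s * Real.exp (φstar ((p:ℝ)+s))) :=
          le_mul_of_one_le_left (by positivity) hAB1
      _ = A * B * (ε * Real.exp 1) ^ s * Real.exp (φstar ((p:ℝ)+s)) := by ring
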